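/- Let (S, ρ) be a matroid scheme. The closure function cl: S → S satisfies: (CL1) x ≤ cl(x) for all x ∈ S; (CL2) if x ≤ y then cl(x) ≤ cl(y); (CL3) cl(cl(x)) = cl(x) for all x ∈ S; (CL4) if x ∈ S, a and b are atoms of S, u ∈ x∨b, a ≤ cl(u), and a ≰ cl(x), then there exists v ∈ x∨a such that v ≤ cl(u) and b ≤ cl(v). -/

import Mathlib

/-- The set of minimal upper bounds of `x` and `y` (denoted `x ∨ y` in the paper). -/
def mub {S : Type*} [PartialOrder S] (x y : S) : Set S :=
  {u | x ≤ u ∧ y ≤ u ∧ ∀ v, x ≤ v → y ≤ v → v ≤ u → v = u}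

/-- The set of maximal lower bounds of `x` and `y` (denoted `x ∧ y` in the paper). -/
def mlb {S : Type*} [PartialOrder S] (x y : S) : Set S :=
  {l | l ≤ x ∧ l ≤ y ∧ ∀ m, m ≤ x → m ≤ y → l ≤ m → m = l}

/-- The set of minimal upper bounds of a subset `T`. -/
def mubSet {S : Type*} [PartialOrder S] (T : Set S) : Set S :=
  {u | (∀ t ∈ T, t ≤ u) ∧ ∀ v, (∀ t ∈ T, t ≤ v) → v ≤ u → v = u}

/-- The number of atoms below `x`, i.e. `|x|`, the rank of `x` in a simplicial poset. -/
noncomputable def natRank {S : Type*} [PartialOrder S] [OrderBot S] (x : S) : ℕ :=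
  Nat.card {a : S // IsAtom a ∧ a ≤ x}

/-- A finite bounded-below poset is simplicial if every lower interval is isomorphic to
the Boolean lattice of subsets of the set of atoms below. -/
def IsSimplicialPoset (S : Type*) [PartialOrder S] [OrderBot S] [Fintype S] : Prop :=
  ∀ x : S, Nonempty (Set.Iic x ≃o Set {a : S // IsAtom a ∧ a ≤ x})

/-- A matroid scheme: a rank function `ρ` on a finite simplicial poset `S`
satisfying (M1)–(M5). -/
structure IsMatroidScheme {S : Type*} [PartialOrder S] [OrderBot S] [Fintype S]
    (ρ : S → ℕ) : Prop where
  simplicial : IsSimplicialPoset S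
  M1 : ∀ x : S, ρ x ≤ natRank x
  M2 : ∀ ⦃x y : S⦄, x ≤ y → ρ x ≤ ρ y
  M3 : ∀ x y u l : S, u ∈ mub x y → l ∈ mlb x y → ρ u + ρ l ≤ ρ x + ρ y
  M4 : ∀ x y l : S, l ∈ mlb x y → ρ x = ρ l → (mub x y).Nonempty
  M5 : ∀ x y : S, ρ x < ρ y →
    ∃ a : S, IsAtom a ∧ a ≤ y ∧ ¬ a ≤ x ∧ (mub x a).Nonempty

/-- `cl` is the closure operator of a matroid scheme `(S, ρ)`:
`cl x` is the greatest element above `x` of the same rank. -/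
def IsClosureFun {S : Type*} [PartialOrder S] (ρ : S → ℕ) (cl : S → S) : Prop :=
  ∀ x : S, x ≤ cl x ∧ ρ (cl x) = ρ x ∧ ∀ y : S, x ≤ y → ρ y = ρ x → y ≤ cl x

/-- The bases of a matroid scheme: the maximal independent elements. -/
def Bases {S : Type*} [PartialOrder S] [OrderBot S] (ρ : S → ℕ) : Set S :=
  {x | ρ x = natRank x ∧ ∀ w, ρ w = natRank w → x ≤ w → w = x}

/-- The circuits of a matroid scheme: the minimal dependent elements. -/
def Circuits {S : Type*} [PartialOrder S] [OrderBot S] (ρ : S → ℕ) : Set S :=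
  {x | ρ x < natRank x ∧ ∀ y, ρ y < natRank y → y ≤ x → y = x}

/-- `c` is the complement `x ∖ a` of `a` in the Boolean lattice `S_{≤ x}`. -/
def IsComplementIn {S : Type*} [PartialOrder S] [OrderBot S] (c a x : S) : Prop :=
  c ≤ x ∧ a ≤ x ∧ (∀ l : S, l ≤ c → l ≤ a → l = ⊥) ∧
    (∀ u : S, u ≤ x → c ≤ u → a ≤ u → u = x)

/-- The rank of a matroid scheme: the common value of `ρ` on maximal elements
(equal to the maximum value of `ρ`). -/
noncomputable def schemeRank {S : Type*} [Fintype S] (ρ : S → ℕ) : ℕ :=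
  sSup (Set.range ρ)

/-- The Tutte polynomial of a matroid scheme, as a two-variable integer function. -/
noncomputable def tutte {S : Type*} [PartialOrder S] [OrderBot S] [Fintype S]
    (ρ : S → ℕ) (x y : ℤ) : ℤ :=
  ∑ w : S, (x - 1) ^ (schemeRank ρ - ρ w) * (y - 1) ^ (natRank w - ρ w)

/-- An element of a poset is an order-atom if it covers a global minimum. -/
def OrdAtom {P : Type*} [PartialOrder P] (a : P) : Prop :=
  ∃ b : P, (∀ z : P, b ≤ z) ∧ b ⋖ a

/-- A partial order is a geometric lattice: it is bounded below, every pair has a least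
upper bound and greatest lower bound, it is atomistic, and it is (upper) semimodular. -/
def IsGeomLatOrder (P : Type*) [PartialOrder P] : Prop :=
  (∃ b : P, ∀ x : P, b ≤ x) ∧
  (∀ x y : P, ∃ u : P, IsLUB {x, y} u) ∧
  (∀ x y : P, ∃ l : P, IsGLB {x, y} l) ∧
  (∀ x : P, IsLUB {a : P | OrdAtom a ∧ a ≤ x} x) ∧
  (∀ x y m j : P, IsGLB {x, y} m → IsLUB {x, y} j → m ⋖ x → y ⋖ j)

/-- A geometric poset: a finite bounded-below poset with rank function `rk`
satisfying (G1) and (G2). -/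
def IsGeometricPoset (P : Type*) [PartialOrder P] [OrderBot P] [Fintype P]
    (rk : P → ℕ) : Prop :=
  rk ⊥ = 0 ∧
  (∀ ⦃x y : P⦄, x ≤ y → rk x ≤ rk y) ∧
  (∀ x y : P, x ⋖ y → rk y = rk x + 1) ∧
  (∀ m : P, IsMax m → IsGeomLatOrder (Set.Iic m)) ∧
  (∀ (x : P) (A : Set P), (∀ a ∈ A, IsAtom a) →
    ∀ y ∈ mubSet A, rk x < rk y → rk y = Nat.card A →
      ∃ a ∈ A, ¬ a ≤ x ∧ ∃ w : P, x ≤ w ∧ a ≤ w)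

section Aux

variable {S : Type*} [PartialOrder S] [OrderBot S]

lemma natRank_bot : natRank (⊥ : S) = 0 := by
  have : IsEmpty {a : S // IsAtom a ∧ a ≤ ⊥} :=
    ⟨fun ⟨a, ha, hle⟩ => ha.1 (le_bot_iff.mp hle)⟩
  rw [natRank]
  exact Nat.card_of_isEmpty

lemma natRank_atom {a : S} (ha : IsAtom a) : natRank a = 1 := by
  rw [natRank, Nat.card_eq_one_iff_unique]
  have key : ∀ c : {c : S // IsAtom c ∧ c ≤ a}, c = ⟨a, ha, le_rfl⟩ := by
    rintro ⟨c, hc, hca⟩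
    rcases hca.lt_or_eq with h | h
    · exact absurd (ha.2 c h) hc.1
    · simp [h]
  exact ⟨⟨fun c d => (key c).trans (key d).symm⟩, ⟨⟨a, ha, le_rfl⟩⟩⟩

lemma le_atom_cases {a m : S} (ha : IsAtom a) (h : m ≤ a) : m = ⊥ ∨ m = a := by
  rcases h.lt_or_eq with h | h
  · exact Or.inl (ha.2 m h)
  · exact Or.inr h

lemma bot_mem_mlb {x a : S} (ha : IsAtom a) (hax : ¬ a ≤ x) : (⊥ : S) ∈ mlb x a := by
  refine ⟨bot_le, bot_le, fun m hmx hma _ => ?_⟩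
  rcases le_atom_cases ha hma with h | h
  · exact h
  · exact absurd (h ▸ hmx) hax

lemma exists_mlb_above [Fintype S] (x y z : S) (hzx : z ≤ x) (hzy : z ≤ y) :
    ∃ l ∈ mlb x y, z ≤ l := by
  obtain ⟨l, ⟨hlx, hly, hzl⟩, hmax⟩ :=
    Set.Finite.exists_maximalFor id {m | m ≤ x ∧ m ≤ y ∧ z ≤ m} (Set.toFinite _)
      ⟨z, hzx, hzy, le_rfl⟩
  exact ⟨l, ⟨hlx, hly, fun m hmx hmy hlm =>
    le_antisymm (hmax ⟨hmx, hmy, hzl.trans hlm⟩ hlm) hlm⟩, hzl⟩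

lemma exists_mub_below [Fintype S] (x a c : S) (hxc : x ≤ c) (hac : a ≤ c) :
    ∃ v ∈ mub x a, v ≤ c := by
  obtain ⟨v, ⟨hxv, hav, hvc⟩, hmin⟩ :=
    Set.Finite.exists_minimalFor id {w | x ≤ w ∧ a ≤ w ∧ w ≤ c} (Set.toFinite _)
      ⟨c, hxc, hac, le_rfl⟩
  exact ⟨v, ⟨hxv, hav, fun w hxw haw hwv =>
    le_antisymm hwv (hmin ⟨hxw, haw, hwv.trans hvc⟩ hwv)⟩, hvc⟩

end Aux

/-- Proposition 5.4: the closure function satisfies (CL1)–(CL4). -/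
theorem statement3 {S : Type*} [PartialOrder S] [OrderBot S] [Fintype S]
    (ρ : S → ℕ) (h : IsMatroidScheme ρ) (cl : S → S) (hcl : IsClosureFun ρ cl) :
    (∀ x : S, x ≤ cl x) ∧
    (∀ x y : S, x ≤ y → cl x ≤ cl y) ∧
    (∀ x : S, cl (cl x) = cl x) ∧
    (∀ x a b u : S, IsAtom a → IsAtom b → u ∈ mub x b → a ≤ cl u → ¬ a ≤ cl x →
      ∃ v ∈ mub x a, v ≤ cl u ∧ b ≤ cl v) := by
  have rho_bot : ρ (⊥ : S) = 0 := by
    have := h.M1 (⊥ : S)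
    rw [natRank_bot] at this
    omega
  have cl1 : ∀ x : S, x ≤ cl x := fun x => (hcl x).1
  have cl2 : ∀ x y : S, x ≤ y → cl x ≤ cl y := by
    intro x y hxy
    obtain ⟨l, hl, hxl⟩ := exists_mlb_above (cl x) (cl y) x (cl1 x) (hxy.trans (cl1 y))
    have hρl : ρ (cl x) = ρ l :=
      le_antisymm (by rw [(hcl x).2.1]; exact h.M2 hxl) (h.M2 hl.1)
    obtain ⟨u, hu⟩ := h.M4 (cl x) (cl y) l hl hρl
    have hM3 := h.M3 (cl x) (cl y) u l hu hl
    have hρu : ρ u = ρ y := by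
      have h1 : ρ (cl y) ≤ ρ u := h.M2 hu.2.1
      have h2 : ρ (cl y) = ρ y := (hcl y).2.1
      omega
    exact (hu.1).trans ((hcl y).2.2 u ((cl1 y).trans hu.2.1)
      (by rw [hρu]))
  refine ⟨cl1, cl2, ?_, ?_⟩
  · -- CL3
    intro x
    have h1 : cl x ≤ cl (cl x) := cl1 (cl x)
    have h2 : cl (cl x) ≤ cl x :=
      (hcl x).2.2 _ ((cl1 x).trans h1) (by rw [(hcl (cl x)).2.1, (hcl x).2.1])
    exact le_antisymm h2 h1
  · -- CL4
    intro x a b u ha hb hu hacl hancl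
    have hax : ¬ a ≤ x := fun hax => hancl (hax.trans (cl1 x))
    have hbx : ¬ b ≤ x := by
      intro hbx
      have hux : u = x := (hu.2.2 x le_rfl hbx hu.1).symm
      exact hancl (hux ▸ hacl)
    have hxclu : x ≤ cl u := hu.1.trans (cl1 u)
    obtain ⟨v, hv, hvclu⟩ := exists_mub_below x a (cl u) hxclu hacl
    -- ρ v = ρ x + 1
    have hρa : ρ a ≤ 1 := (natRank_atom ha) ▸ h.M1 a
    have hρb : ρ b ≤ 1 := (natRank_atom hb) ▸ h.M1 b
    have hM3v := h.M3 x a v ⊥ hv (bot_mem_mlb ha hax)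
    have hxltv : ρ x < ρ v := by
      rcases lt_or_eq_of_le (h.M2 hv.1) with h' | h'
      · exact h'
      · exact absurd (hv.2.1.trans ((hcl x).2.2 v hv.1 h'.symm)) hancl
    have hρv : ρ v = ρ x + 1 := by omega
    have hM3u := h.M3 x b u ⊥ hu (bot_mem_mlb hb hbx)
    have hvleu : ρ v ≤ ρ u := (hcl u).2.1 ▸ h.M2 hvclu
    have hρu : ρ u = ρ v := by omega
    have hcluv : cl u ≤ cl v :=
      (hcl v).2.2 (cl u) hvclu (by rw [(hcl u).2.1, hρu])
    exact ⟨v, hv, hvclu, hu.2.1.trans ((cl1 u).trans hcluv)⟩
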